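/- Let r₀ > 0, let k ≥ 1 be an integer, let α ∈ ℂ, let c_r, c_φ ∈ ℂ satisfy c_φ = i·c_r if k = 1 and c_r = c_φ = 0 if k ≠ 1, and let w_k, ρ_k : [r₀,∞) → ℂ be continuous with s ↦ s^{-k+1}·(|w_k(s)| + |ρ_k(s)|) integrable on (r₀,∞). Define v_{r,k}(r) and v_{φ,k}(r) for r ≥ r₀ by the formulas v_{r,k}(r) = (i/2)·r^{-k-1}·∫_{r₀}^r s^{k+1}(w_k − i·ρ_k) ds + (i/2)·r^{k-1}·∫_r^∞ s^{-k+1}(w_k + i·ρ_k) ds + α·i·r^{-k-1} + c_r and v_{φ,k}(r) = (1/2)·r^{-k-1}·∫_{r₀}^r s^{k+1}(w_k − i·ρ_k) ds − (1/2)·r^{k-1}·∫_r^∞ s^{-k+1}(w_k + i·ρ_k) ds + α·r^{-k-1} + c_φ. Suppose g_r, g_φ ∈ ℂ are such that v_{r,k}(r₀) = g_r and v_{φ,k}(r₀) = g_φ. Then necessarily α = (r₀^{k+1}/2)·(g_φ − i·g_r), and the compatibility condition r₀^{k-1}·∫_{r₀}^∞ s^{-k+1}·(w_k(s) + i·ρ_k(s))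 ds + g_φ + i·g_r = c_φ + i·c_r holds. -/
import Mathlib


open Real MeasureTheory intervalIntegral

/-- matching the explicit Fourier-mode solution with Dirichlet
boundary data `g_r, g_φ` on the circle of radius `r₀` determines the constant
`α` and forces the compatibility (orthogonality) condition at mode `k`. -/
theorem divcurl_fourier_mode_boundary_compatibility (r₀ : ℝ) (hr₀ : 0 < r₀)
    (k : ℤ) (hk : 1 ≤ k) (α cr cφ : ℂ)
    (hc1 : k = 1 → cφ = Complex.I * cr)
    (hc2 : k ≠ 1 → cr = 0 ∧ cφ = 0)
    (w ρ : ℝ → ℂ)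
    (hw : ContinuousOn w (Set.Ici r₀)) (hρ : ContinuousOn ρ (Set.Ici r₀))
    (hint : IntegrableOn (fun s : ℝ => s ^ (-k + 1) * (‖w s‖ + ‖ρ s‖)) (Set.Ioi r₀))
    (vr vφ : ℝ → ℂ)
    (hvr : ∀ r : ℝ, vr r =
      (Complex.I / 2) * ((r ^ (-k - 1) : ℝ) : ℂ) *
          (∫ s in r₀..r, ((s ^ (k + 1) : ℝ) : ℂ) * (w s - Complex.I * ρ s))
        + (Complex.I / 2) * ((r ^ (k - 1) : ℝ) : ℂ) *
          (∫ s in Set.Ioi r, ((s ^ (-k + 1) : ℝ) : ℂ) * (w s + Complex.I * ρ s))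
        + α * Complex.I * ((r ^ (-k - 1) : ℝ) : ℂ) + cr)
    (hvφ : ∀ r : ℝ, vφ r =
      (1 / 2 : ℂ) * ((r ^ (-k - 1) : ℝ) : ℂ) *
          (∫ s in r₀..r, ((s ^ (k + 1) : ℝ) : ℂ) * (w s - Complex.I * ρ s))
        - (1 / 2 : ℂ) * ((r ^ (k - 1) : ℝ) : ℂ) *
          (∫ s in Set.Ioi r, ((s ^ (-k + 1) : ℝ) : ℂ) * (w s + Complex.I * ρ s))
        + α * ((r ^ (-k - 1) : ℝ) : ℂ) + cφ)
    (gr gφ : ℂ) (hgr : vr r₀ = gr) (hgφ : vφ r₀ = gφ) :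
    α = ((r₀ ^ (k + 1) : ℝ) : ℂ) / 2 * (gφ - Complex.I * gr) ∧
    ((r₀ ^ (k - 1) : ℝ) : ℂ) *
        (∫ s in Set.Ioi r₀, ((s ^ (-k + 1) : ℝ) : ℂ) * (w s + Complex.I * ρ s))
      + gφ + Complex.I * gr = cφ + Complex.I * cr := by
  have hcc : cφ = Complex.I * cr := by
    by_cases h1 : k = 1
    · exact hc1 h1
    · obtain ⟨h2, h3⟩ := hc2 h1; simp [h2, h3]
  set J := ∫ s in Set.Ioi r₀, ((s ^ (-k + 1) : ℝ) : ℂ) * (w s + Complex.I * ρ s) with hJ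
  have e1 : gr = Complex.I / 2 * ((r₀ ^ (k - 1) : ℝ) : ℂ) * J
      + α * Complex.I * ((r₀ ^ (-k - 1) : ℝ) : ℂ) + cr := by
    rw [← hgr, hvr r₀, intervalIntegral.integral_same]; ring
  have e2 : gφ = -(1 / 2 : ℂ) * ((r₀ ^ (k - 1) : ℝ) : ℂ) * J
      + α * ((r₀ ^ (-k - 1) : ℝ) : ℂ) + cφ := by
    rw [← hgφ, hvφ r₀, intervalIntegral.integral_same]; ring
  have hC : ((r₀ ^ (k + 1) : ℝ) : ℂ) * ((r₀ ^ (-k - 1) : ℝ) : ℂ) = 1 := by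
    have : (r₀ : ℂ) ≠ 0 := Complex.ofReal_ne_zero.mpr hr₀.ne'
    push_cast
    rw [← zpow_add₀ this]
    simp
  have hI : Complex.I * Complex.I = -1 := Complex.I_mul_I
  constructor
  · linear_combination (((r₀ ^ (k + 1) : ℝ) : ℂ) * Complex.I / 2) * e1
      - ((r₀ ^ (k + 1) : ℝ) : ℂ) / 2 * e2 - α * hC
      - ((r₀ ^ (k + 1) : ℝ) : ℂ) / 2 * hcc
      + (((r₀ ^ (k + 1) : ℝ) : ℂ) * ((r₀ ^ (k - 1) : ℝ) : ℂ) * J / 4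
        + α * ((r₀ ^ (k + 1) : ℝ) : ℂ) * ((r₀ ^ (-k - 1) : ℝ) : ℂ) / 2) * hI
  · linear_combination Complex.I * e1 + e2
      + (((r₀ ^ (k - 1) : ℝ) : ℂ) * J / 2 + α * ((r₀ ^ (-k - 1) : ℝ) : ℂ)) * hI
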